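/- Semi-discrete energy estimate for the reparametrized curve shortening flow: let α ∈ (0,1] and suppose X̂_h ∈ H^{1,2}((0,T), S_h²) solves, for all φ_h ∈ S_h² and t ∈ (0,T), ∫₀^{2π} (α X̂_{ht}·φ_h + (1−α)(X̂_{ht}·ν_h)(ν_h·φ_h)) |X̂_{hθ}|² dθ + ∫₀^{2π} X̂_{hθ}·φ_{hθ} dθ = 0. Then (1/2)∫₀^{2π}|X̂_{hθ}(·,T)|² dθ + ∫₀^T∫₀^{2π}(α|X̂_{ht}|² + (1−α)|X̂_{ht}·ν_h|²)|X̂_{hθ}|² dθ dt = (1/2)∫₀^{2π}|X̂_{hθ}(·,0)|² dθ. -/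

import Mathlib

open intervalIntegral

/-- The space `S_h` of continuous, 2π-periodic functions on ℝ that are affine on each
segment `[2πj/N, 2π(j+1)/N]` of the uniform grid with `N` nodes. -/
def Sh (N : ℕ) : Set (ℝ → ℝ) :=
  {f | Continuous f ∧ (∀ s, f (s + 2 * Real.pi) = f s) ∧
    ∀ j : Fin N, ∃ a b : ℝ, ∀ s ∈ Set.Icc (2 * Real.pi * (j.val : ℝ) / N)
      (2 * Real.pi * ((j.val : ℝ) + 1) / N), f s = a * s + b}

/-- a.e. version of equality on Ioo giving interval integral equality -/
lemma integral_congr_Ioo {f g : ℝ → ℝ} {p q : ℝ} (hpq : p ≤ q)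
    (h : ∀ x ∈ Set.Ioo p q, f x = g x) :
    ∫ x in p..q, f x = ∫ x in p..q, g x := by
  apply intervalIntegral.integral_congr_ae
  have h0 : ∀ᵐ x : ℝ ∂MeasureTheory.volume, x ≠ q := by
    refine MeasureTheory.ae_iff.mpr ?_
    have : {x : ℝ | ¬ x ≠ q} = {q} := by ext x; simp
    rw [this]; exact MeasureTheory.measure_singleton q
  filter_upwards [h0] with x hx hmem
  rw [Set.uIoc_of_le hpq] at hmem
  exact h x ⟨hmem.1, lt_of_le_of_ne hmem.2 hx⟩

lemma interval_const {f : ℝ → ℝ} {p q cst : ℝ} (hpq : p ≤ q)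
    (h : ∀ x ∈ Set.Ioo p q, f x = cst) :
    IntervalIntegrable f MeasureTheory.volume p q ∧ ∫ x in p..q, f x = cst * (q - p) := by
  constructor
  · rw [intervalIntegrable_iff_integrableOn_Ioc_of_le hpq]
    have hae : (fun _ : ℝ => cst) =ᵐ[MeasureTheory.volume.restrict (Set.Ioc p q)] f := by
      rw [Filter.EventuallyEq, MeasureTheory.ae_restrict_iff' measurableSet_Ioc]
      have h0 : ∀ᵐ x : ℝ ∂MeasureTheory.volume, x ≠ q := by
        refine MeasureTheory.ae_iff.mpr ?_
        have : {x : ℝ | ¬ x ≠ q} = {q} := by ext x; simp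
        rw [this]; exact MeasureTheory.measure_singleton q
      filter_upwards [h0] with x hx hmem
      exact (h x ⟨hmem.1, lt_of_le_of_ne hmem.2 hx⟩).symm
    exact (MeasureTheory.integrableOn_const measure_Ioc_lt_top.ne).congr hae
  · rw [integral_congr_Ioo hpq h, intervalIntegral.integral_const, smul_eq_mul]; ring

lemma grid_lt {N : ℕ} (hN : 0 < N) (j : ℝ) :
    2 * Real.pi * j / N < 2 * Real.pi * (j + 1) / N := by
  have hπ := Real.pi_pos
  have hNR : (0:ℝ) < N := by exact_mod_cast hN
  rw [div_lt_div_iff₀ hNR hNR]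
  nlinarith

lemma slope_eq {N : ℕ} (hN : 0 < N) {f : ℝ → ℝ} (hf : f ∈ Sh N) (j : Fin N) :
    ∀ θ ∈ Set.Ioo (2 * Real.pi * (j.val : ℝ) / N) (2 * Real.pi * ((j.val : ℝ) + 1) / N),
      deriv f θ = (f (2 * Real.pi * ((j.val : ℝ) + 1) / N)
        - f (2 * Real.pi * (j.val : ℝ) / N)) * N / (2 * Real.pi) := by
  intro θ hθ
  have hπ := Real.pi_pos
  have hNR : (0:ℝ) < N := by exact_mod_cast hN
  set p := 2 * Real.pi * (j.val : ℝ) / N with hp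
  set q := 2 * Real.pi * ((j.val : ℝ) + 1) / N with hq
  have hpq : p < q := grid_lt hN _
  obtain ⟨a, b, hab⟩ := hf.2.2 j
  have hfp : f p = a * p + b := hab p ⟨le_refl _, hpq.le⟩
  have hfq : f q = a * q + b := hab q ⟨hpq.le, le_refl _⟩
  have hqp : q - p = 2 * Real.pi / N := by rw [hp, hq]; field_simp; ring
  have ha : a = (f q - f p) * N / (2 * Real.pi) := by
    rw [hfp, hfq]
    have : a * q + b - (a * p + b) = a * (q - p) := by ring
    rw [this, hqp]
    field_simp
  have hev : f =ᶠ[nhds θ] fun s => a * s + b := by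
    filter_upwards [Ioo_mem_nhds hθ.1 hθ.2] with s hs
    exact hab s (Set.Ioo_subset_Icc_self hs)
  rw [hev.deriv_eq, ← ha]
  have : HasDerivAt (fun s : ℝ => a * s + b) a θ := by
    simpa using ((hasDerivAt_id θ).const_mul a).add_const b
  exact this.deriv

lemma integral_eq_sum {N : ℕ} (hN : 0 < N) (f : ℝ → ℝ) (c : Fin N → ℝ)
    (h : ∀ j : Fin N, ∀ θ ∈ Set.Ioo (2 * Real.pi * (j.val : ℝ) / N)
      (2 * Real.pi * ((j.val : ℝ) + 1) / N), f θ = c j) :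
    ∫ θ in (0:ℝ)..(2 * Real.pi), f θ = (2 * Real.pi / N) * ∑ j, c j := by
  have hπ := Real.pi_pos
  have hNR : (0:ℝ) < N := by exact_mod_cast hN
  set ψ : ℕ → ℝ := fun k => 2 * Real.pi * k / N with hψ
  set c' : ℕ → ℝ := fun k => c ⟨k % N, Nat.mod_lt k hN⟩ with hc'
  have hc'eq : ∀ (k : ℕ) (hk : k < N), c' k = c ⟨k, hk⟩ := by
    intro k hk
    simp only [hc']
    congr 1
    exact Fin.ext (Nat.mod_eq_of_lt hk)
  have hkey : ∀ k : ℕ, k < N → IntervalIntegrable f MeasureTheory.volume (ψ k) (ψ (k+1)) ∧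
      ∫ θ in ψ k..ψ (k+1), f θ = c' k * (2 * Real.pi / N) := by
    intro k hk
    have h1 : ψ (k+1) = 2 * Real.pi * ((k:ℝ) + 1) / N := by rw [hψ]; push_cast; ring_nf
    have hle : ψ k ≤ ψ (k+1) := by rw [h1]; exact (grid_lt hN _).le
    have hcc := h ⟨k, hk⟩
    simp only [Fin.val_mk] at hcc
    have hqp : ψ (k+1) - ψ k = 2 * Real.pi / N := by rw [h1, hψ]; field_simp; ring
    have := interval_const (f := f) (cst := c ⟨k, hk⟩) hle (by rw [h1]; exact hcc)
    exact ⟨this.1, by rw [this.2, hqp, hc'eq k hk]⟩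
  have hsplit := intervalIntegral.sum_integral_adjacent_intervals
    (μ := MeasureTheory.volume) (a := ψ) (n := N) (fun k hk => (hkey k hk).1)
  have hψ0 : ψ 0 = 0 := by simp [hψ]
  have hψN : ψ N = 2 * Real.pi := by rw [hψ]; field_simp
  rw [hψ0, hψN] at hsplit
  rw [← hsplit, Finset.sum_congr rfl (fun k hk => (hkey k (Finset.mem_range.mp hk)).2)]
  have : ∑ j : Fin N, c j = ∑ k ∈ Finset.range N, c' k := by
    rw [← Fin.sum_univ_eq_sum_range (fun k => c' k) N]
    refine Finset.sum_congr rfl fun j _ => ?_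
    rw [hc'eq j.val j.isLt]
  rw [this, Finset.mul_sum]
  exact Finset.sum_congr rfl fun k _ => mul_comm _ _

/-- Slope of `X` in `θ` on the `j`-th grid interval. -/
noncomputable def slA (N : ℕ) (X : ℝ → ℝ → Fin 2 → ℝ) (t : ℝ) (j : Fin N) (β : Fin 2) : ℝ :=
  (X t (2 * Real.pi * ((j.val : ℝ) + 1) / N) β - X t (2 * Real.pi * (j.val : ℝ) / N) β)
    * N / (2 * Real.pi)

/-- Slope of `X_t` in `θ` on the `j`-th grid interval. -/
noncomputable def slB (N : ℕ) (X : ℝ → ℝ → Fin 2 → ℝ) (t : ℝ) (j : Fin N) (β : Fin 2) : ℝ :=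
  (deriv (fun s => X s (2 * Real.pi * ((j.val : ℝ) + 1) / N) β) t
    - deriv (fun s => X s (2 * Real.pi * (j.val : ℝ) / N) β) t) * N / (2 * Real.pi)

theorem stmt9' (N : ℕ) (hN : 0 < N) (α T : ℝ) (hα : α ∈ Set.Ioc (0 : ℝ) 1) (hT : 0 < T)
    (X νh : ℝ → ℝ → Fin 2 → ℝ)
    (hXSh : ∀ t β, (fun θ => X t θ β) ∈ Sh N)
    (hXt : ∀ θ β, Differentiable ℝ (fun t => X t θ β))
    (hXtSh : ∀ t β, (fun θ => deriv (fun s => X s θ β) t) ∈ Sh N)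
    (hweak : ∀ t ∈ Set.Ioo (0 : ℝ) T, ∀ φ : ℝ → Fin 2 → ℝ,
      (∀ β, (fun θ => φ θ β) ∈ Sh N) →
      (∫ θ in (0 : ℝ)..(2 * Real.pi),
        (α * ∑ β, deriv (fun s => X s θ β) t * φ θ β
          + (1 - α) * (∑ β, deriv (fun s => X s θ β) t * νh t θ β)
              * (∑ β, νh t θ β * φ θ β))
        * (∑ β, (deriv (fun u => X t u β) θ) ^ 2))
      + (∫ θ in (0 : ℝ)..(2 * Real.pi),
          ∑ β, deriv (fun u => X t u β) θ * deriv (fun u => φ u β) θ) = 0) :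
    (1 / 2) * (∫ θ in (0 : ℝ)..(2 * Real.pi), ∑ β, (deriv (fun u => X T u β) θ) ^ 2)
      + (∫ t in (0 : ℝ)..T, ∫ θ in (0 : ℝ)..(2 * Real.pi),
          (α * ∑ β, (deriv (fun s => X s θ β) t) ^ 2
            + (1 - α) * (∑ β, deriv (fun s => X s θ β) t * νh t θ β) ^ 2)
          * (∑ β, (deriv (fun u => X t u β) θ) ^ 2))
      = (1 / 2) * (∫ θ in (0 : ℝ)..(2 * Real.pi), ∑ β, (deriv (fun u => X 0 u β) θ) ^ 2) := by
  have hπ := Real.pi_pos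
  have hNR : (0:ℝ) < N := by exact_mod_cast hN
  -- slopes of X and X_t in θ
  have hAx : ∀ t (j : Fin N) β, ∀ θ ∈ Set.Ioo (2 * Real.pi * (j.val : ℝ) / N)
      (2 * Real.pi * ((j.val : ℝ) + 1) / N),
      deriv (fun u => X t u β) θ = slA N X t j β :=
    fun t j β θ hθ => slope_eq hN (hXSh t β) j θ hθ
  have hAy : ∀ t (j : Fin N) β, ∀ θ ∈ Set.Ioo (2 * Real.pi * (j.val : ℝ) / N)
      (2 * Real.pi * ((j.val : ℝ) + 1) / N),
      deriv (fun u => deriv (fun s => X s u β) t) θ = slB N X t j β :=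
    fun t j β θ hθ => slope_eq hN (hXtSh t β) j θ hθ
  -- the energy integral as a finite sum
  have hE : ∀ t, (∫ θ in (0:ℝ)..(2 * Real.pi), ∑ β, (deriv (fun u => X t u β) θ) ^ 2)
      = (2 * Real.pi / N) * ∑ j, ∑ β, (slA N X t j β) ^ 2 := by
    intro t
    refine integral_eq_sum hN _ (fun j => ∑ β, (slA N X t j β) ^ 2) ?_
    intro j θ hθ
    exact Finset.sum_congr rfl fun β _ => by rw [hAx t j β θ hθ]
  -- the cross integral as a finite sum
  have hC : ∀ t, (∫ θ in (0:ℝ)..(2 * Real.pi),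
        ∑ β, deriv (fun u => X t u β) θ * deriv (fun u => deriv (fun s => X s u β) t) θ)
      = (2 * Real.pi / N) * ∑ j, ∑ β, slA N X t j β * slB N X t j β := by
    intro t
    refine integral_eq_sum hN _ (fun j => ∑ β, slA N X t j β * slB N X t j β) ?_
    intro j θ hθ
    exact Finset.sum_congr rfl fun β _ => by rw [hAx t j β θ hθ, hAy t j β θ hθ]
  -- t-derivative of the slopes
  have hAt : ∀ t (j : Fin N) β, HasDerivAt (fun s => slA N X s j β) (slB N X t j β) t := by
    intro t j β
    have h1 : HasDerivAt (fun s => X s (2 * Real.pi * ((j.val : ℝ) + 1) / N) β)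
        (deriv (fun s => X s (2 * Real.pi * ((j.val : ℝ) + 1) / N) β) t) t :=
      ((hXt _ β) t).hasDerivAt
    have h2 : HasDerivAt (fun s => X s (2 * Real.pi * (j.val : ℝ) / N) β)
        (deriv (fun s => X s (2 * Real.pi * (j.val : ℝ) / N) β) t) t :=
      ((hXt _ β) t).hasDerivAt
    exact ((h1.sub h2).mul_const (N:ℝ)).div_const (2 * Real.pi)
  -- derivative of the energy
  have hEE : ∀ t, HasDerivAt (fun s => (Real.pi / N) * ∑ j, ∑ β, (slA N X s j β) ^ 2)
      ((2 * Real.pi / N) * ∑ j, ∑ β, slA N X t j β * slB N X t j β) t := by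
    intro t
    have h1 : HasDerivAt (fun s => ∑ j : Fin N, ∑ β : Fin 2, (slA N X s j β) ^ 2)
        (∑ j : Fin N, ∑ β : Fin 2, 2 * slA N X t j β * slB N X t j β) t := by
      refine HasDerivAt.fun_sum fun j _ => HasDerivAt.fun_sum fun β _ => ?_
      simpa using (hAt t j β).fun_pow 2
    have heq : (2 * Real.pi / N) * ∑ j, ∑ β, slA N X t j β * slB N X t j β
        = (Real.pi / ↑N) * ∑ j : Fin N, ∑ β : Fin 2, 2 * slA N X t j β * slB N X t j β := by
      simp only [Finset.mul_sum]
      exact Finset.sum_congr rfl fun j _ => Finset.sum_congr rfl fun β _ => by ring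
    rw [heq]
    exact h1.const_mul _
  -- nonnegativity of the dissipation
  have hDnn : ∀ t, (0:ℝ) ≤ ∫ θ in (0:ℝ)..(2 * Real.pi),
      (α * ∑ β, (deriv (fun s => X s θ β) t) ^ 2
        + (1 - α) * (∑ β, deriv (fun s => X s θ β) t * νh t θ β) ^ 2)
      * (∑ β, (deriv (fun u => X t u β) θ) ^ 2) := by
    intro t
    refine intervalIntegral.integral_nonneg (by positivity) (fun u _ => ?_)
    refine mul_nonneg (add_nonneg (mul_nonneg hα.1.le
      (Finset.sum_nonneg fun β _ => sq_nonneg _))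
      (mul_nonneg (by linarith [hα.2]) (sq_nonneg _)))
      (Finset.sum_nonneg fun β _ => sq_nonneg _)
  -- dissipation equals minus derivative of energy, on (0,T)
  have hDC : ∀ t ∈ Set.Ioo (0:ℝ) T,
      (∫ θ in (0:ℝ)..(2 * Real.pi),
        (α * ∑ β, (deriv (fun s => X s θ β) t) ^ 2
          + (1 - α) * (∑ β, deriv (fun s => X s θ β) t * νh t θ β) ^ 2)
        * (∑ β, (deriv (fun u => X t u β) θ) ^ 2))
      = -((2 * Real.pi / N) * ∑ j, ∑ β, slA N X t j β * slB N X t j β) := by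
    intro t ht
    have hw : (∫ θ in (0 : ℝ)..(2 * Real.pi),
        (α * ∑ β, deriv (fun s => X s θ β) t * deriv (fun s => X s θ β) t
          + (1 - α) * (∑ β, deriv (fun s => X s θ β) t * νh t θ β)
              * (∑ β, νh t θ β * deriv (fun s => X s θ β) t))
        * (∑ β, (deriv (fun u => X t u β) θ) ^ 2))
      + (∫ θ in (0 : ℝ)..(2 * Real.pi),
          ∑ β, deriv (fun u => X t u β) θ * deriv (fun u => deriv (fun s => X s u β) t) θ) = 0 :=
      hweak t ht (fun θ β => deriv (fun s => X s θ β) t) (fun β => hXtSh t β)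
    have h1 : (∫ θ in (0 : ℝ)..(2 * Real.pi),
        (α * ∑ β, deriv (fun s => X s θ β) t * deriv (fun s => X s θ β) t
          + (1 - α) * (∑ β, deriv (fun s => X s θ β) t * νh t θ β)
              * (∑ β, νh t θ β * deriv (fun s => X s θ β) t))
        * (∑ β, (deriv (fun u => X t u β) θ) ^ 2))
        = ∫ θ in (0:ℝ)..(2 * Real.pi),
        (α * ∑ β, (deriv (fun s => X s θ β) t) ^ 2
          + (1 - α) * (∑ β, deriv (fun s => X s θ β) t * νh t θ β) ^ 2)
        * (∑ β, (deriv (fun u => X t u β) θ) ^ 2) := by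
      refine intervalIntegral.integral_congr (fun θ _ => ?_)
      have e1 : ∑ β, deriv (fun s => X s θ β) t * deriv (fun s => X s θ β) t
          = ∑ β, (deriv (fun s => X s θ β) t) ^ 2 :=
        Finset.sum_congr rfl fun β _ => (sq _).symm
      have e2 : ∑ β, νh t θ β * deriv (fun s => X s θ β) t
          = ∑ β, deriv (fun s => X s θ β) t * νh t θ β :=
        Finset.sum_congr rfl fun β _ => mul_comm _ _
      rw [e1, e2]; ring
    rw [h1, hC t] at hw
    linarith
  -- FTC on [0,T]
  have hcont : Continuous (fun s => -((Real.pi / N) * ∑ j, ∑ β, (slA N X s j β) ^ 2)) :=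
    continuous_iff_continuousAt.mpr fun t => ((hEE t).neg.continuousAt)
  have hint : IntervalIntegrable
      (fun t => -((2 * Real.pi / N) * ∑ j, ∑ β, slA N X t j β * slB N X t j β))
      MeasureTheory.volume 0 T := by
    refine intervalIntegrable_deriv_of_nonneg (g := fun s =>
      -((Real.pi / N) * ∑ j, ∑ β, (slA N X s j β) ^ 2)) hcont.continuousOn ?_ ?_
    · intro x hx
      exact (hEE x).neg
    · intro x hx
      rw [min_eq_left hT.le, max_eq_right hT.le] at hx
      have := hDC x hx
      have h0 := hDnn x
      rw [this] at h0
      exact h0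
  have hFTC : (∫ t in (0:ℝ)..T,
        -((2 * Real.pi / N) * ∑ j, ∑ β, slA N X t j β * slB N X t j β))
      = -((Real.pi / N) * ∑ j, ∑ β, (slA N X T j β) ^ 2)
        - -((Real.pi / N) * ∑ j, ∑ β, (slA N X 0 j β) ^ 2) := by
    refine intervalIntegral.integral_eq_sub_of_hasDerivAt_of_le hT.le
      hcont.continuousOn (fun x _ => (hEE x).neg) hint
  -- replace the dissipation integral using a.e. equality on (0,T)
  have hJ : (∫ t in (0 : ℝ)..T, ∫ θ in (0 : ℝ)..(2 * Real.pi),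
          (α * ∑ β, (deriv (fun s => X s θ β) t) ^ 2
            + (1 - α) * (∑ β, deriv (fun s => X s θ β) t * νh t θ β) ^ 2)
          * (∑ β, (deriv (fun u => X t u β) θ) ^ 2))
      = (Real.pi / N) * (∑ j, ∑ β, (slA N X 0 j β) ^ 2)
        - (Real.pi / N) * (∑ j, ∑ β, (slA N X T j β) ^ 2) := by
    rw [integral_congr_Ioo hT.le hDC, hFTC]
    ring
  rw [hE T, hE 0, hJ]
  ring

/-- Energy identity for the semi-discrete reparametrized curve shortening
flow: if `X̂_h : [0,T] → S_h²` solves the semi-discrete weak formulation, then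
(1/2)∫|X̂_{hθ}(T)|² + ∫₀^T∫ (α|X̂_{ht}|² + (1−α)|X̂_{ht}·ν_h|²)|X̂_{hθ}|²
  = (1/2)∫|X̂_{hθ}(0)|². -/
theorem stmt9 (N : ℕ) (hN : 0 < N) (α T : ℝ) (hα : α ∈ Set.Ioc (0 : ℝ) 1) (hT : 0 < T)
    (X νh : ℝ → ℝ → Fin 2 → ℝ)
    (hXSh : ∀ t β, (fun θ => X t θ β) ∈ Sh N)
    (hXt : ∀ θ β, Differentiable ℝ (fun t => X t θ β))
    (hXtSh : ∀ t β, (fun θ => deriv (fun s => X s θ β) t) ∈ Sh N)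
    (hνunit : ∀ t θ, ∑ β, νh t θ β ^ 2 = 1)
    (hνconst : ∀ t, ∀ j : Fin N, ∀ θ ∈ Set.Ico (2 * Real.pi * (j.val : ℝ) / N)
      (2 * Real.pi * ((j.val : ℝ) + 1) / N), νh t θ = νh t (2 * Real.pi * (j.val : ℝ) / N))
    (hνorth : ∀ t, ∀ j : Fin N,
      ∑ β, νh t (2 * Real.pi * (j.val : ℝ) / N) β *
        (X t (2 * Real.pi * ((j.val : ℝ) + 1) / N) β - X t (2 * Real.pi * (j.val : ℝ) / N) β) = 0)
    (hweak : ∀ t ∈ Set.Ioo (0 : ℝ) T, ∀ φ : ℝ → Fin 2 → ℝ,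
      (∀ β, (fun θ => φ θ β) ∈ Sh N) →
      (∫ θ in (0 : ℝ)..(2 * Real.pi),
        (α * ∑ β, deriv (fun s => X s θ β) t * φ θ β
          + (1 - α) * (∑ β, deriv (fun s => X s θ β) t * νh t θ β)
              * (∑ β, νh t θ β * φ θ β))
        * (∑ β, (deriv (fun u => X t u β) θ) ^ 2))
      + (∫ θ in (0 : ℝ)..(2 * Real.pi),
          ∑ β, deriv (fun u => X t u β) θ * deriv (fun u => φ u β) θ) = 0) :
    (1 / 2) * (∫ θ in (0 : ℝ)..(2 * Real.pi), ∑ β, (deriv (fun u => X T u β) θ) ^ 2)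
      + (∫ t in (0 : ℝ)..T, ∫ θ in (0 : ℝ)..(2 * Real.pi),
          (α * ∑ β, (deriv (fun s => X s θ β) t) ^ 2
            + (1 - α) * (∑ β, deriv (fun s => X s θ β) t * νh t θ β) ^ 2)
          * (∑ β, (deriv (fun u => X t u β) θ) ^ 2))
      = (1 / 2) * (∫ θ in (0 : ℝ)..(2 * Real.pi), ∑ β, (deriv (fun u => X 0 u β) θ) ^ 2) := by
  exact stmt9' N hN α T hα hT X νh hXSh hXt hXtSh hweak
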